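/- arXiv:2404.15366 — 2 statements merged into one kernel-verified Lean document; each statement's English description precedes it below -/
import Mathlib

section
/- For any μ > 0, any finite label set Y, scoring functions f, f' : X → (Y → ℝ), and any labeled sample (x, y), the inequality W_μ(ω_{f'}(x, h_f(x))) ≤ W_μ(ω_f(x, y)) + W_μ(ω_{f'}(x, y)) holds, where ω_f(x,y) = (f(x)(y) - max_{y' ≠ y} f(x)(y'))/2 is the margin and h_f(x) = argmax_y f(x)(y) is the induced labeling function. -/
/-- The ramp loss `W_μ`. -/
noncomputable def ramp (μ v : ℝ) : ℝ :=
  if μ ≤ v then 0 else if v ≤ 0 then 1 else 1 - v / μ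

/-- The margin `ω_f(x,y) = (f(x)(y) - max_{y' ≠ y} f(x)(y'))/2` of a scoring function. -/
noncomputable def margin {X Y : Type*} [Fintype Y] [DecidableEq Y] [Nontrivial Y]
    (f : X → Y → ℝ) (x : X) (y : Y) : ℝ :=
  (f x y - (Finset.univ.erase y).sup'
      (by obtain ⟨b, hb⟩ := exists_ne y
          exact ⟨b, Finset.mem_erase.mpr ⟨hb, Finset.mem_univ b⟩⟩) (f x)) / 2

/-- Subadditivity of the ramp-margin loss:
`W_μ(ω_{f'}(x, h_f(x))) ≤ W_μ(ω_f(x,y)) + W_μ(ω_{f'}(x,y))`,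
where `hf` is the labeling function induced by `f` (an argmax of `f x`). -/
theorem ramp_margin_subadd {X Y : Type*} [Fintype Y] [DecidableEq Y] [Nontrivial Y]
    (μ : ℝ) (hμ : 0 < μ) (f f' : X → Y → ℝ) (hf : X → Y)
    (hargmax : ∀ x y, f x y ≤ f x (hf x)) (x : X) (y : Y) :
    ramp μ (margin f' x (hf x)) ≤ ramp μ (margin f x y) + ramp μ (margin f' x y) := by
  have hnn : ∀ v, 0 ≤ ramp μ v := fun v => by
    unfold ramp
    split_ifs with h1 h2
    · exact le_rfl
    · norm_num
    · push_neg at h1 h2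
      have : v / μ ≤ 1 := (div_le_one hμ).mpr h1.le
      linarith
  have hle1 : ∀ v, ramp μ v ≤ 1 := fun v => by
    unfold ramp
    split_ifs with h1 h2
    · norm_num
    · exact le_rfl
    · push_neg at h1 h2
      have : 0 < v / μ := div_pos h2 hμ
      linarith
  by_cases hxy : hf x = y
  · rw [hxy]
    linarith [hnn (margin f x y)]
  · have hm : margin f x y ≤ 0 := by
      unfold margin
      have hmem : hf x ∈ Finset.univ.erase y :=
        Finset.mem_erase.mpr ⟨hxy, Finset.mem_univ _⟩
      have := Finset.le_sup' (f x) hmem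
      have := hargmax x y
      have : f x y - (Finset.univ.erase y).sup'
          (by obtain ⟨b, hb⟩ := exists_ne y
              exact ⟨b, Finset.mem_erase.mpr ⟨hb, Finset.mem_univ b⟩⟩) (f x) ≤ 0 := by
        linarith
      linarith
    have : ramp μ (margin f x y) = 1 := by
      unfold ramp
      split_ifs with h1
      · linarith
      · rfl
    rw [this]
    linarith [hnn (margin f' x y), hle1 (margin f' x (hf x))]
end

section
/- For any probability measure Q over X × Y, μ > 0, and scoring functions f, f* : X → (Y → ℝ), the target zero-one error satisfies L_Q(h_f) ≤ E_Q[W_μ(ω_{f*}(x, h_f(x)))] + L^μ_Q(f*), where L_Q(h_f) = E_{(x,y)∼Q} 𝟙[h_f(x) ≠ y] and L^μ_Q(f*) = E_{(x,y)∼Q}[W_μ(ω_{f*}(x,y))]. -/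
open MeasureTheory

lemma ramp_nonneg {μ v : ℝ} (hμ : 0 < μ) : 0 ≤ ramp μ v := by
  unfold ramp
  split_ifs with h1 h2
  · exact le_refl 0
  · norm_num
  · push_neg at h1 h2
    have : v / μ < 1 := (div_lt_one hμ).mpr h1
    linarith

lemma ramp_one {μ v : ℝ} (hμ : 0 < μ) (hv : v ≤ 0) : ramp μ v = 1 := by
  unfold ramp
  rw [if_neg (by linarith), if_pos hv]

lemma margins_not_both_pos {X Y : Type*} [Fintype Y] [DecidableEq Y] [Nontrivial Y]
    (g : X → Y → ℝ) (x : X) {a b : Y} (hab : a ≠ b)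
    (ha : 0 < margin g x a) (hb : 0 < margin g x b) : False := by
  unfold margin at ha hb
  have hane : (Finset.univ.erase a).Nonempty := by
    obtain ⟨c, hc⟩ := exists_ne a
    exact ⟨c, Finset.mem_erase.mpr ⟨hc, Finset.mem_univ c⟩⟩
  have hbne : (Finset.univ.erase b).Nonempty := by
    obtain ⟨c, hc⟩ := exists_ne b
    exact ⟨c, Finset.mem_erase.mpr ⟨hc, Finset.mem_univ c⟩⟩
  have h1 : g x b ≤ (Finset.univ.erase a).sup' hane (g x) :=
    Finset.le_sup' (g x) (Finset.mem_erase.mpr ⟨hab.symm, Finset.mem_univ b⟩)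
  have h2 : g x a ≤ (Finset.univ.erase b).sup' hbne (g x) :=
    Finset.le_sup' (g x) (Finset.mem_erase.mpr ⟨hab, Finset.mem_univ a⟩)
  have ha' : (Finset.univ.erase a).sup' hane (g x) < g x a := by linarith
  have hb' : (Finset.univ.erase b).sup' hbne (g x) < g x b := by linarith
  linarith

/-- Target zero-one error bound:
`L_Q(h_f) ≤ E_Q[W_μ(ω_{f*}(x, h_f(x)))] + L^μ_Q(f*)`. -/
theorem zero_one_error_le {X Y : Type*} [MeasurableSpace X] [MeasurableSpace Y]
    [Fintype Y] [DecidableEq Y] [Nontrivial Y]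
    (Q : Measure (X × Y)) [IsProbabilityMeasure Q]
    (μ : ℝ) (hμ : 0 < μ) (f fstar : X → Y → ℝ) (hf : X → Y)
    (hargmax : ∀ x y, f x y ≤ f x (hf x))
    (h1 : Integrable (fun z : X × Y => if hf z.1 ≠ z.2 then (1 : ℝ) else 0) Q)
    (h2 : Integrable (fun z : X × Y => ramp μ (margin fstar z.1 (hf z.1))) Q)
    (h3 : Integrable (fun z : X × Y => ramp μ (margin fstar z.1 z.2)) Q) :
    (∫ z, (if hf z.1 ≠ z.2 then (1 : ℝ) else 0) ∂Q)
      ≤ (∫ z, ramp μ (margin fstar z.1 (hf z.1)) ∂Q)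
        + ∫ z, ramp μ (margin fstar z.1 z.2) ∂Q := by
  rw [← integral_add h2 h3]
  refine integral_mono h1 (h2.add h3) ?_
  intro z
  simp only [Pi.add_apply]
  by_cases h : hf z.1 ≠ z.2
  · rw [if_pos h]
    rcases le_or_gt (margin fstar z.1 (hf z.1)) 0 with hm | hm
    · have := ramp_nonneg (v := margin fstar z.1 z.2) hμ
      rw [ramp_one hμ hm]; linarith
    · have hm2 : margin fstar z.1 z.2 ≤ 0 := by
        by_contra hpos
        push_neg at hpos
        exact margins_not_both_pos fstar z.1 h hm hpos
      have := ramp_nonneg (v := margin fstar z.1 (hf z.1)) hμ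
      rw [ramp_one hμ hm2]; linarith
  · rw [if_neg h]
    have := ramp_nonneg (v := margin fstar z.1 (hf z.1)) hμ
    have := ramp_nonneg (v := margin fstar z.1 z.2) hμ
    linarith
end
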